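/- Let A be a commutative unital complex Banach algebra and let a ∈ A. Suppose that the spectrum σ(a) of a has empty interior in ℂ, and that A is rationally generated by a, i.e., the set { p(a)·q(a)⁻¹ : p, q complex polynomials such that q has no zero on σ(a) } is dense in A (note q(a) is invertible since q does not vanish on σ(a)). Then the set of invertible elements of A is dense in A. -/

import Mathlib

open Polynomial

/-- The closure of the units is closed under multiplication. -/
lemma aux_mul_mem_closure_units {A : Type*} [NormedCommRing A] {x y : A}
    (hx : x ∈ closure {x : A | IsUnit x}) (hy : y ∈ closure {x : A | IsUnit x}) :
    x * y ∈ closure {x : A | IsUnit x} := by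
  rcases mem_closure_iff_seq_limit.mp hx with ⟨u, hu, hul⟩
  rcases mem_closure_iff_seq_limit.mp hy with ⟨v, hv, hvl⟩
  exact mem_closure_iff_seq_limit.mpr
    ⟨fun n => u n * v n, fun n => (hu n).mul (hv n), hul.mul hvl⟩

/-- Scalars are in the closure of the units. -/
lemma aux_const_mem_closure_units (A : Type*) [NormedCommRing A] [NormedAlgebra ℂ A] (c : ℂ) :
    algebraMap ℂ A c ∈ closure {x : A | IsUnit x} := by
  by_cases hc : c = 0
  · subst hc
    refine mem_closure_iff_seq_limit.mpr
      ⟨fun n : ℕ => algebraMap ℂ A (1 / (n + 1)), fun n => ?_, ?_⟩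
    · exact (isUnit_iff_ne_zero.mpr
        (one_div_ne_zero (Nat.cast_add_one_ne_zero n))).map (algebraMap ℂ A)
    · have h1 : Filter.Tendsto (fun n : ℕ => (1 : ℂ) / (n + 1)) Filter.atTop (nhds 0) := by
        have := (Complex.continuous_ofReal.tendsto 0).comp
          (tendsto_one_div_add_atTop_nhds_zero_nat)
        simp only [Function.comp_def] at this
        simpa [one_div] using this
      simpa [Function.comp_def] using ((continuous_algebraMap ℂ A).tendsto 0).comp h1
  · exact subset_closure ((isUnit_iff_ne_zero.mpr hc).map (algebraMap ℂ A))

/-- If a commutative unital complex Banach algebra `A` is rationally generated by an element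
`a` whose spectrum has empty interior, then the invertible elements of `A` are dense in `A`. -/
theorem dense_invertibles_of_rationally_generated
    (A : Type*) [NormedCommRing A] [NormedAlgebra ℂ A] [CompleteSpace A]
    (a : A) (hspec : interior (spectrum ℂ a) = ∅)
    (hgen : Dense {x : A | ∃ p q : Polynomial ℂ,
      (∀ z ∈ spectrum ℂ a, Polynomial.eval z q ≠ 0) ∧
      x = Polynomial.aeval a p * Ring.inverse (Polynomial.aeval a q)}) :
    Dense {x : A | IsUnit x} := by
  rcases subsingleton_or_nontrivial A with h | h
  · exact fun x => subset_closure (isUnit_of_subsingleton x)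
  -- complement of the spectrum is dense
  have hden : Dense (spectrum ℂ a)ᶜ := interior_eq_empty_iff_dense_compl.mp hspec
  -- every linear factor is in the closure of the units
  have hlin : ∀ z : ℂ, a - algebraMap ℂ A z ∈ closure {x : A | IsUnit x} := by
    intro z
    by_cases hz : z ∈ spectrum ℂ a
    · rcases mem_closure_iff_seq_limit.mp (hden z) with ⟨w, hw, hwl⟩
      refine mem_closure_iff_seq_limit.mpr ⟨fun n => a - algebraMap ℂ A (w n), fun n => ?_, ?_⟩
      · simpa using (spectrum.notMem_iff.mp (hw n)).neg
      · have hmap : Filter.Tendsto (fun n => algebraMap ℂ A (w n)) Filter.atTop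
            (nhds (algebraMap ℂ A z)) := ((continuous_algebraMap ℂ A).tendsto z).comp hwl
        exact Filter.Tendsto.sub tendsto_const_nhds hmap
    · exact subset_closure (by simpa using (spectrum.notMem_iff.mp hz).neg)
  -- every polynomial applied to `a` is in the closure of the units
  have hpoly : ∀ (n : ℕ) (p : Polynomial ℂ), p.natDegree ≤ n →
      Polynomial.aeval a p ∈ closure {x : A | IsUnit x} := by
    intro n
    induction n with
    | zero =>
      intro p hp
      rw [Polynomial.eq_C_of_natDegree_le_zero hp, Polynomial.aeval_C]
      exact aux_const_mem_closure_units A _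
    | succ n ih =>
      intro p hp
      by_cases hdeg : p.natDegree ≤ n
      · exact ih p hdeg
      · have hppos : 0 < p.natDegree := by omega
        have hpne : p ≠ 0 := fun h => by simp [h] at hppos
        have hdne : p.degree ≠ 0 := by
          rw [Polynomial.degree_eq_natDegree hpne]
          exact_mod_cast hppos.ne'
        obtain ⟨z, hz⟩ := IsAlgClosed.exists_root p hdne
        obtain ⟨r, hr⟩ := Polynomial.dvd_iff_isRoot.mpr hz
        have hrne : r ≠ 0 := fun h => hpne (by simp [hr, h])
        have hXz : (Polynomial.X - Polynomial.C z : Polynomial ℂ) ≠ 0 :=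
          Polynomial.X_sub_C_ne_zero z
        have hrd : r.natDegree ≤ n := by
          have := Polynomial.natDegree_mul hXz hrne
          rw [← hr, Polynomial.natDegree_X_sub_C] at this
          omega
        rw [hr, map_mul]
        have haX : Polynomial.aeval a (Polynomial.X - Polynomial.C z) =
            a - algebraMap ℂ A z := by
          simp
        rw [haX]
        exact aux_mul_mem_closure_units (hlin z) (ih r hrd)
  -- conclude
  have hsub : {x : A | ∃ p q : Polynomial ℂ,
      (∀ z ∈ spectrum ℂ a, Polynomial.eval z q ≠ 0) ∧
      x = Polynomial.aeval a p * Ring.inverse (Polynomial.aeval a q)} ⊆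
      closure {x : A | IsUnit x} := by
    rintro x ⟨p, q, hq, rfl⟩
    have hqu : IsUnit (Polynomial.aeval a q) := by
      apply spectrum.isUnit_of_zero_notMem (R := ℂ)
      rw [spectrum.map_polynomial_aeval a q]
      rintro ⟨z, hzmem, hzeq⟩
      exact hq z hzmem hzeq
    exact aux_mul_mem_closure_units (hpoly p.natDegree p le_rfl)
      (subset_closure (isUnit_ringInverse.mpr hqu))
  exact dense_closure.mp (hgen.mono hsub)
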